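/- Let H=(V,E) be a simple countable k-uniform hypergraph with k ≥ 2 that has property C_2. Then for every injection φ: E → ℕ there exists an infinite loose path e_1, e_2, ... in H with φ(e_i) < φ(e_{i+1}) for all i ≥ 1. -/
import Mathlib


/-- Property `C_ℓ` of a `k`-uniform hypergraph with edge set `E`: there is a nonempty set of
vertices `V'` such that every `v ∈ V'` lies in infinitely many edges `e` with `|V' ∩ e| ≥ ℓ`. -/
def PropC {V : Type*} (E : Set (Finset V)) (ℓ : ℕ) : Prop :=
  ∃ V' : Set V, V'.Nonempty ∧
    ∀ v ∈ V', {e | e ∈ E ∧ v ∈ e ∧ ℓ ≤ ((e : Set V) ∩ V').ncard}.Infinite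

/-- The `i`-th edge of the infinite loose path with vertex sequence `w` (0-indexed):
`{w ((k-1)i), w ((k-1)i + 1), …, w ((k-1)i + k - 1)}`. -/
def looseEdge {V : Type*} [DecidableEq V] (k : ℕ) (w : ℕ → V) (i : ℕ) : Finset V :=
  (Finset.range k).image fun j => w ((k - 1) * i + j)

/-- The edge of an infinite `(k-1)`-branching tree `x` at the node indexed by
the finite sequence `s`: `{x s} ∪ {x (a :: s) | a ∈ Fin (k-1)}`. -/
def treeEdge {V : Type*} [DecidableEq V] (k : ℕ) (x : List (Fin (k - 1)) → V)
    (s : List (Fin (k - 1))) : Finset V :=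
  insert (x s) (Finset.univ.image fun a : Fin (k - 1) => x (a :: s))

/-- A hypergraph is simple if any two distinct vertices lie together in at most one edge. -/
def SimpleHyper {V : Type*} (E : Set (Finset V)) : Prop :=
  ∀ e ∈ E, ∀ f ∈ E, ∀ u v : V, u ≠ v → u ∈ e → v ∈ e → u ∈ f → v ∈ f → e = f

theorem stmt2 {V : Type*} [Countable V] [Infinite V] [DecidableEq V]
    (k : ℕ) (hk : 2 ≤ k) (E : Set (Finset V)) (hunif : ∀ e ∈ E, e.card = k)
    (hsimple : SimpleHyper E) (hC2 : PropC E 2) :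
    ∀ φ : Finset V → ℕ, Set.InjOn φ E →
      ∃ w : ℕ → V, Function.Injective w ∧ (∀ i, looseEdge k w i ∈ E) ∧
        ∀ i, φ (looseEdge k w i) < φ (looseEdge k w (i + 1)) := by
  intro φ hφ
  obtain ⟨V', ⟨v0, hv0⟩, hV'⟩ := hC2
  -- Key selection lemma
  have key : ∀ v, v ∈ V' → ∀ F : Finset V, ∀ m : ℕ,
      ∃ e u, e ∈ E ∧ v ∈ e ∧ u ∈ e ∧ u ∈ V' ∧ u ≠ v ∧ (∀ x ∈ F, x ∈ e → x = v) ∧ m < φ e := by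
    intro v hv F m
    have hS := hV' v hv
    have hB1 : {e | e ∈ E ∧ φ e ≤ m}.Finite := by
      apply Set.Finite.of_finite_image (f := φ)
      · exact (Set.finite_Iic m).subset (by rintro _ ⟨e, ⟨-, he⟩, rfl⟩; exact he)
      · exact hφ.mono fun e he => he.1
    have hB2 : (⋃ x ∈ (F.erase v : Finset V), {e | e ∈ E ∧ v ∈ e ∧ x ∈ e}).Finite := by
      apply Set.Finite.biUnion (F.erase v).finite_toSet
      intro x hx
      apply Set.Subsingleton.finite
      rintro e ⟨heE, hve, hxe⟩ f ⟨hfE, hvf, hxf⟩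
      exact hsimple e heE f hfE x v (Finset.ne_of_mem_erase hx) hxe hve hxf hvf
    obtain ⟨e, heS, hbad⟩ := (hS.diff (hB1.union hB2)).nonempty
    obtain ⟨heE, hve, hcard⟩ := heS
    have hm : m < φ e := by
      by_contra h
      exact hbad (Or.inl ⟨heE, le_of_not_gt h⟩)
    have havd : ∀ x ∈ F, x ∈ e → x = v := by
      intro x hxF hxe
      by_contra hxv
      exact hbad (Or.inr (Set.mem_biUnion (Finset.mem_coe.2 (Finset.mem_erase.2 ⟨hxv, hxF⟩))
        ⟨heE, hve, hxe⟩))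
    obtain ⟨u, hu, huv⟩ :=
      Set.exists_ne_of_one_lt_ncard (s := (e : Set V) ∩ V') (by omega) v
    exact ⟨e, u, heE, hve, hu.1, hu.2, huv, havd, hm⟩
  choose eF uF hEe hvemem huemem huV hune havd hgt using key
  -- the iterated state: (current vertex, used vertices, last φ value)
  let next : {v : V // v ∈ V'} × Finset V × ℕ → {v : V // v ∈ V'} × Finset V × ℕ :=
    fun p => ⟨⟨uF p.1.1 p.1.2 p.2.1 p.2.2, huV p.1.1 p.1.2 p.2.1 p.2.2⟩,
      p.2.1 ∪ eF p.1.1 p.1.2 p.2.1 p.2.2, φ (eF p.1.1 p.1.2 p.2.1 p.2.2)⟩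
  let st : ℕ → {v : V // v ∈ V'} × Finset V × ℕ := fun n => next^[n] ⟨⟨v0, hv0⟩, {v0}, 0⟩
  let e : ℕ → Finset V := fun n => eF (st n).1.1 (st n).1.2 (st n).2.1 (st n).2.2
  let vv : ℕ → V := fun n => (st n).1.1
  let Fs : ℕ → Finset V := fun n => (st n).2.1
  have hstep : ∀ n, st (n + 1) = next (st n) := fun n => Function.iterate_succ_apply' next n _
  have heE : ∀ n, e n ∈ E := fun n => hEe _ _ _ _
  have hveE : ∀ n, vv n ∈ e n := fun n => hvemem _ _ _ _
  have hFsucc : ∀ n, Fs (n + 1) = Fs n ∪ e n := fun n => by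
    show (st (n + 1)).2.1 = _
    rw [hstep n]
  have hvsucc : ∀ n, vv (n + 1) = uF (st n).1.1 (st n).1.2 (st n).2.1 (st n).2.2 := fun n => by
    show (st (n + 1)).1.1 = _
    rw [hstep n]
  have hmsucc : ∀ n, (st (n + 1)).2.2 = φ (e n) := fun n => by
    rw [hstep n]
  have huE : ∀ n, vv (n + 1) ∈ e n := fun n => by rw [hvsucc n]; exact huemem _ _ _ _
  have hune' : ∀ n, vv (n + 1) ≠ vv n := fun n => by rw [hvsucc n]; exact hune _ _ _ _
  have havd' : ∀ n, ∀ x ∈ Fs n, x ∈ e n → x = vv n := fun n => havd _ _ _ _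
  have hφinc : ∀ n, φ (e n) < φ (e (n + 1)) := fun n => by
    have h : (st (n + 1)).2.2 < φ (e (n + 1)) := hgt _ _ _ _
    rwa [hmsucc n] at h
  have hFmono : Monotone Fs := monotone_nat_of_le_succ fun n => by
    rw [hFsucc n]; exact Finset.subset_union_left
  have heFs : ∀ n, e n ⊆ Fs (n + 1) := fun n => by
    rw [hFsucc n]; exact Finset.subset_union_right
  have hvnotF : ∀ n, vv (n + 1) ∉ Fs n := fun n h => hune' n (havd' n _ h (huE n))
  -- middle vertices
  have hcard : ∀ n, (e n).card = k := fun n => hunif _ (heE n)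
  let M : ℕ → Finset V := fun n => ((e n).erase (vv n)).erase (vv (n + 1))
  have hMsub : ∀ n, M n ⊆ e n := fun n =>
    (Finset.erase_subset _ _).trans (Finset.erase_subset _ _)
  have hvnM : ∀ n, vv n ∉ M n := fun n h =>
    Finset.notMem_erase _ _ (Finset.mem_of_mem_erase h)
  have hv1M : ∀ n, vv (n + 1) ∉ M n := fun n => Finset.notMem_erase _ _
  have hMcard : ∀ n, (M n).card = k - 2 := fun n => by
    have h1 : vv (n + 1) ∈ (e n).erase (vv n) := Finset.mem_erase.2 ⟨hune' n, huE n⟩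
    show (((e n).erase (vv n)).erase (vv (n + 1))).card = k - 2
    rw [Finset.card_erase_of_mem h1, Finset.card_erase_of_mem (hveE n), hcard n]
    omega
  let mid : ℕ → ℕ → V := fun n j =>
    if h : j < (M n).card then ((M n).equivFin.symm ⟨j, h⟩ : V) else v0
  have hmidmem : ∀ n j, j < (M n).card → mid n j ∈ M n := fun n j h => by
    show (if h : j < (M n).card then ((M n).equivFin.symm ⟨j, h⟩ : V) else v0) ∈ M n
    rw [dif_pos h]
    exact ((M n).equivFin.symm ⟨j, h⟩).2
  have hmidinj : ∀ n j1 j2, j1 < (M n).card → j2 < (M n).card → mid n j1 = mid n j2 →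
      j1 = j2 := by
    intro n j1 j2 h1 h2 hm
    have hm' : ((M n).equivFin.symm ⟨j1, h1⟩ : V) = ((M n).equivFin.symm ⟨j2, h2⟩ : V) := by
      simpa [mid, dif_pos h1, dif_pos h2] using hm
    have := (M n).equivFin.symm.injective (Subtype.ext hm')
    exact congrArg Fin.val this
  -- the vertex sequence
  have hk1 : 0 < k - 1 := by omega
  let w : ℕ → V := fun m =>
    if m % (k - 1) = 0 then vv (m / (k - 1)) else mid (m / (k - 1)) (m % (k - 1) - 1)
  have wdef : ∀ m, w m =
      if m % (k - 1) = 0 then vv (m / (k - 1)) else mid (m / (k - 1)) (m % (k - 1) - 1) :=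
    fun m => rfl
  have hdiv : ∀ n r, r < k - 1 → ((k - 1) * n + r) / (k - 1) = n := fun n r h => by
    rw [Nat.mul_add_div hk1, Nat.div_eq_of_lt h, add_zero]
  have hmod : ∀ n r, r < k - 1 → ((k - 1) * n + r) % (k - 1) = r := fun n r h => by
    rw [Nat.mul_add_mod, Nat.mod_eq_of_lt h]
  have hw0 : ∀ n, w ((k - 1) * n) = vv n := fun n => by
    have h1 : ((k - 1) * n) % (k - 1) = 0 := Nat.mul_mod_right _ _
    have h2 : ((k - 1) * n) / (k - 1) = n := Nat.mul_div_cancel_left _ hk1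
    rw [wdef, h1, h2, if_pos rfl]
  have hwr : ∀ n r, 0 < r → r < k - 1 → w ((k - 1) * n + r) = mid n (r - 1) := by
    intro n r h0 h1
    rw [wdef, hmod n r h1, hdiv n r h1, if_neg (by omega)]
  have hwlast : ∀ n, w ((k - 1) * n + (k - 1)) = vv (n + 1) := fun n => by
    have h : (k - 1) * n + (k - 1) = (k - 1) * (n + 1) := by ring
    rw [h, hw0]
  -- the loose edges are exactly the chosen edges
  have hEdge : ∀ n, looseEdge k w n = e n := by
    intro n
    apply Finset.ext
    intro x
    simp only [looseEdge, Finset.mem_image, Finset.mem_range]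
    constructor
    · rintro ⟨j, hj, rfl⟩
      rcases Nat.lt_or_ge j (k - 1) with h | h
      · rcases Nat.eq_zero_or_pos j with rfl | hj0
        · rw [add_zero, hw0]; exact hveE n
        · rw [hwr n j hj0 h]
          exact hMsub n (hmidmem n (j - 1) (by rw [hMcard]; omega))
      · have hjk : j = k - 1 := by omega
        subst hjk
        rw [hwlast]
        exact huE n
    · intro hx
      by_cases h1 : x = vv n
      · exact ⟨0, by omega, by rw [add_zero, hw0]; exact h1.symm⟩
      by_cases h2 : x = vv (n + 1)
      · exact ⟨k - 1, by omega, by rw [hwlast]; exact h2.symm⟩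
      · have hxM : x ∈ M n := Finset.mem_erase.2 ⟨h2, Finset.mem_erase.2 ⟨h1, hx⟩⟩
        have hilt : ((M n).equivFin ⟨x, hxM⟩ : ℕ) < k - 2 :=
          lt_of_lt_of_eq ((M n).equivFin ⟨x, hxM⟩).isLt (hMcard n)
        refine ⟨((M n).equivFin ⟨x, hxM⟩ : ℕ) + 1, by omega, ?_⟩
        rw [hwr n _ (by omega) (by omega)]
        show mid n (((M n).equivFin ⟨x, hxM⟩ : ℕ) + 1 - 1) = x
        rw [Nat.add_sub_cancel]
        show (if h : ((M n).equivFin ⟨x, hxM⟩ : ℕ) < (M n).card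
          then ((M n).equivFin.symm ⟨_, h⟩ : V) else v0) = x
        rw [dif_pos ((M n).equivFin ⟨x, hxM⟩).isLt]
        exact congrArg Subtype.val ((M n).equivFin.symm_apply_apply ⟨x, hxM⟩)
  -- classification of w values
  have hclass : ∀ m, (m % (k - 1) = 0 ∧ w m = vv (m / (k - 1))) ∨
      (m % (k - 1) ≠ 0 ∧ w m ∈ M (m / (k - 1)) ∧
        w m = mid (m / (k - 1)) (m % (k - 1) - 1)) := by
    intro m
    by_cases h : m % (k - 1) = 0
    · exact Or.inl ⟨h, by rw [wdef, if_pos h]⟩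
    · refine Or.inr ⟨h, ?_, by rw [wdef, if_neg h]⟩
      rw [wdef, if_neg h]
      exact hmidmem _ _ (by have := Nat.mod_lt m hk1; rw [hMcard]; omega)
  have hwe : ∀ m, w m ∈ e (m / (k - 1)) := fun m => by
    rcases hclass m with ⟨_, h⟩ | ⟨_, h, _⟩
    · rw [h]; exact hveE _
    · exact hMsub _ h
  -- injectivity
  have hcross : ∀ m1 m2, m1 / (k - 1) < m2 / (k - 1) → w m1 ≠ w m2 := by
    intro m1 m2 hn heq
    have hx1 : w m1 ∈ Fs (m1 / (k - 1) + 1) := heFs _ (hwe m1)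
    rcases hclass m2 with ⟨_, h2⟩ | ⟨_, h2, _⟩
    · have hpos : m2 / (k - 1) ≠ 0 := by
        intro h0; rw [h0] at hn; exact Nat.not_lt_zero _ hn
      obtain ⟨p, hp⟩ := Nat.exists_eq_succ_of_ne_zero hpos
      rw [hp] at h2 hn
      rcases eq_or_lt_of_le (Nat.lt_succ_iff.1 hn) with h | h
      · rcases hclass m1 with ⟨_, h1⟩ | ⟨_, h1, _⟩
        · exact hune' p (by rw [← h2, ← heq, h1, h])
        · apply hv1M p
          rw [h] at h1
          rw [← h2, ← heq]
          exact h1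
      · apply hvnotF p
        rw [← h2, ← heq]
        exact hFmono (by omega : m1 / (k - 1) + 1 ≤ p) hx1
    · have hxF : w m2 ∈ Fs (m2 / (k - 1)) := by
        rw [← heq]
        exact hFmono (by omega : m1 / (k - 1) + 1 ≤ m2 / (k - 1)) hx1
      have hvx := havd' (m2 / (k - 1)) _ hxF (hMsub _ h2)
      rw [hvx] at h2
      exact hvnM _ h2
  have hsame : ∀ m1 m2, m1 / (k - 1) = m2 / (k - 1) → w m1 = w m2 → m1 = m2 := by
    intro m1 m2 hn heq
    rcases hclass m1 with ⟨ha, hw1⟩ | ⟨ha, hM1, hw1⟩ <;>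
      rcases hclass m2 with ⟨hb, hw2⟩ | ⟨hb, hM2, hw2⟩
    · calc m1 = (k - 1) * (m1 / (k - 1)) + m1 % (k - 1) := (Nat.div_add_mod _ _).symm
        _ = (k - 1) * (m2 / (k - 1)) + m2 % (k - 1) := by rw [hn, ha, hb]
        _ = m2 := Nat.div_add_mod _ _
    · exfalso
      rw [← hn] at hM2
      apply hvnM (m1 / (k - 1))
      rw [← hw1, heq]
      exact hM2
    · exfalso
      rw [hn] at hM1
      apply hvnM (m2 / (k - 1))
      rw [← hw2, ← heq]
      exact hM1
    · have hb1 : m1 % (k - 1) - 1 < (M (m1 / (k - 1))).card := by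
        rw [hMcard]; have := Nat.mod_lt m1 hk1; omega
      have hb2 : m2 % (k - 1) - 1 < (M (m1 / (k - 1))).card := by
        rw [hMcard]; have := Nat.mod_lt m2 hk1; omega
      have hr : m1 % (k - 1) - 1 = m2 % (k - 1) - 1 := by
        apply hmidinj (m1 / (k - 1)) _ _ hb1 hb2
        rw [← hw1, heq, hw2, ← hn]
      have hmm : m1 % (k - 1) = m2 % (k - 1) := by omega
      calc m1 = (k - 1) * (m1 / (k - 1)) + m1 % (k - 1) := (Nat.div_add_mod _ _).symm
        _ = (k - 1) * (m2 / (k - 1)) + m2 % (k - 1) := by rw [hn, hmm]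
        _ = m2 := Nat.div_add_mod _ _
  have hwinj : Function.Injective w := by
    intro m1 m2 heq
    rcases lt_trichotomy (m1 / (k - 1)) (m2 / (k - 1)) with h | h | h
    · exact absurd heq (hcross _ _ h)
    · exact hsame _ _ h heq
    · exact absurd heq.symm (hcross _ _ h)
  exact ⟨w, hwinj, fun i => (hEdge i) ▸ heE i, fun i => by rw [hEdge, hEdge]; exact hφinc i⟩
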